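/- With the notation of the previous index bound, equality [O_K : O] = ∏_{i=1}^k (1/[O : p_i]) ∏_{j=1}^{l_i} N(P_{i,j})^{e_{i,j}} holds if and only if the conductor f of O divides ∏_{i=1}^k ∏_{j=1}^{l_i} P_{i,j}^{e_{i,j}}. -/

import Mathlib

set_option maxHeartbeats 1000000
set_option synthInstance.maxHeartbeats 1000000

open NumberField

private theorem prod_eq_inf_aux {R : Type*} [CommRing R] {ι : Type*}
    [DecidableEq ι] (s : Finset ι) (f : ι → Ideal R)
    (h : ∀ i ∈ s, ∀ j ∈ s, i ≠ j → IsCoprime (f i) (f j)) :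
    ∏ i ∈ s, f i = s.inf f := by
  induction s using Finset.induction_on with
  | empty => simp
  | @insert a s ha ih =>
    rw [Finset.prod_insert ha, Finset.inf_insert,
      ← ih (fun i hi j hj hij => h i (Finset.mem_insert_of_mem hi) j
        (Finset.mem_insert_of_mem hj) hij),
      ← Ideal.inf_eq_mul_of_isCoprime]
    exact IsCoprime.prod_right fun j hj =>
      h a (Finset.mem_insert_self a s) j (Finset.mem_insert_of_mem hj)
        (fun haj => ha (haj ▸ hj))

private theorem module_finite_subring {K : Type*} [Field K] [NumberField K]
    (O : Subring (𝓞 K)) : Module.Finite ℤ O := by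
  let N : Submodule ℤ (𝓞 K) := AddSubgroup.toIntSubmodule O.toAddSubgroup
  have hfg : N.FG := IsNoetherian.noetherian N
  have hN : Module.Finite ℤ N := Module.Finite.iff_fg.mpr hfg
  let e : N →ₗ[ℤ] O :=
    { toFun := fun x => ⟨x.1, x.2⟩
      map_add' := fun x y => rfl
      map_smul' := fun n x => rfl }
  exact Module.Finite.of_surjective e (fun x => ⟨⟨x.1, x.2⟩, rfl⟩)

private theorem idx_eq {R : Type*} [CommRing R] (I : Ideal R) :
    I.toAddSubgroup.index = Nat.card (R ⧸ I) := rfl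

private theorem comap_idx {R : Type*} [CommRing R] (O : Subring R) (I : Ideal R) :
    (Ideal.comap O.subtype I).toAddSubgroup.index
      = I.toAddSubgroup.relIndex O.toAddSubgroup := rfl

private theorem absNorm_eq_idx {K : Type*} [Field K] [NumberField K] (I : Ideal (𝓞 K)) :
    Ideal.absNorm I = I.toAddSubgroup.index := rfl

/-- Equality in the index bound `[𝓞 K : O] = ∏ i (1/[O : p i]) ∏ j N(P i j) ^ (e i j)` holds
if and only if the conductor `f` of `O` divides `∏ i ∏ j (P i j) ^ (e i j)`. -/
theorem index_eq_iff_conductor_dvd {K : Type*} [Field K] [NumberField K]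
    (O : Subring (𝓞 K)) (hO : O.toAddSubgroup.index ≠ 0)
    (f : Ideal (𝓞 K)) (hf : ∀ a : 𝓞 K, a ∈ f ↔ ∀ x : 𝓞 K, a * x ∈ O)
    {k : ℕ} (p : Fin k → Ideal O) (hpprime : ∀ i, (p i).IsPrime) (hpne : ∀ i, p i ≠ ⊥)
    (hpdist : Function.Injective p)
    (l : Fin k → ℕ) (hl : ∀ i, 1 ≤ l i)
    (P : (i : Fin k) → Fin (l i) → Ideal (𝓞 K)) (hPprime : ∀ i j, (P i j).IsPrime)
    (hPdist : ∀ i, Function.Injective (P i))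
    (e : (i : Fin k) → Fin (l i) → ℕ) (he : ∀ i j, 1 ≤ e i j)
    (hfact : ∀ i, (p i).map O.subtype = ∏ j, P i j ^ e i j) :
    (O.toAddSubgroup.index * ∏ i, Nat.card (O ⧸ p i) =
        ∏ i, ∏ j, Ideal.absNorm (P i j) ^ e i j) ↔
      (∏ i, ∏ j, P i j ^ e i j) ≤ f := by
  classical
  haveI : Module.Finite ℤ O := module_finite_subring O
  haveI : NoZeroSMulDivisors ℤ O := ⟨fun {n x} h => by
    have : (n : ℤ) • (x : 𝓞 K) = 0 := by
      rw [← Subring.coe_zero O, ← h]; rfl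
    rcases smul_eq_zero.mp this with h1 | h2
    · exact Or.inl h1
    · exact Or.inr (Subtype.ext h2)⟩
  haveI : Module.Free ℤ O := Module.free_of_finite_type_torsion_free'
  set Pp : Ideal (𝓞 K) := ∏ i, ∏ j, P i j ^ e i j with hPp
  set A : AddSubgroup (𝓞 K) := O.toAddSubgroup with hA
  set B : AddSubgroup (𝓞 K) := Pp.toAddSubgroup with hB
  set Pp' : Ideal O := Ideal.comap O.subtype Pp with hPp'
  set c : Ideal O := ∏ i, p i with hc
  -- map of product
  have hmap : Ideal.map O.subtype c = Pp := by
    have h1 : Ideal.map O.subtype c = ∏ i, Ideal.map O.subtype (p i) :=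
      map_prod (Ideal.mapHom O.subtype) p Finset.univ
    rw [h1, hPp]
    exact Finset.prod_congr rfl fun i _ => hfact i
  -- finiteness of quotients
  haveI hfin : ∀ i, Finite (O ⧸ p i) := fun i =>
    Ideal.finiteQuotientOfFreeOfNeBot (p i) (hpne i)
  -- maximality
  have hmax : ∀ i, (p i).IsMaximal := fun i => by
    haveI := hpprime i
    exact Ideal.Quotient.maximal_of_isField _ (Finite.isField_of_domain _)
  -- each map (p i) is a proper ideal
  have hPpine : ∀ i, Ideal.map O.subtype (p i) ≠ ⊤ := fun i => by
    have h1 : Ideal.map O.subtype (p i) ≤ P i ⟨0, hl i⟩ := by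
      rw [hfact i]
      exact le_trans Ideal.prod_le_inf
        (le_trans (Finset.inf_le (Finset.mem_univ _))
          (Ideal.pow_le_self (Nat.one_le_iff_ne_zero.mp (he i ⟨0, hl i⟩))))
    exact fun h => (hPprime i ⟨0, hl i⟩).ne_top (top_le_iff.mp (h ▸ h1))
  -- m = index of c
  have hm : (∏ i, Nat.card (O ⧸ p i)) = c.toAddSubgroup.index := by
    have hcop : Pairwise (Function.onFun IsCoprime p) := fun i j hij =>
      (Ideal.isCoprime_iff_sup_eq).mpr
        ((hmax i).coprime_of_ne (hmax j) (fun h => hij (hpdist h)))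
    have hinf : (⨅ i, p i) = c := by
      rw [hc, prod_eq_inf_aux Finset.univ p
        (fun i _ j _ hij => hcop hij)]
      simp [Finset.inf_eq_iInf]
    calc ∏ i, Nat.card (O ⧸ p i) = Nat.card (∀ i, O ⧸ p i) := Nat.card_pi.symm
      _ = Nat.card (O ⧸ ⨅ i, p i) :=
        (Nat.card_congr (Ideal.quotientInfRingEquivPiQuotient p hcop).toEquiv).symm
      _ = c.toAddSubgroup.index := by rw [hinf, idx_eq]
  -- index of Pp' is the relindex of B in A
  have hr : Pp'.toAddSubgroup.index = B.relIndex A := comap_idx O Pp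
  -- c ≤ Pp'
  have hcPp' : c ≤ Pp' := by
    rw [hPp', ← hmap]
    exact Ideal.le_comap_map
  -- absNorm Pp = B.index
  have hn : (∏ i, ∏ j, Ideal.absNorm (P i j) ^ e i j) = B.index := by
    rw [show (∏ i, ∏ j, Ideal.absNorm (P i j) ^ e i j) = Ideal.absNorm Pp by
      rw [hPp]; simp [map_prod, map_pow], absNorm_eq_idx]
  -- Pp ≤ f ↔ B ≤ A
  have hBf : Pp ≤ f ↔ B ≤ A := by
    constructor
    · intro h x hx
      have := (hf x).1 (h hx) 1
      rwa [mul_one] at this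
    · intro h x hx
      exact (hf x).2 fun y => h (Ideal.mul_mem_right y Pp hx)
  have hmne : (∏ i, Nat.card (O ⧸ p i)) ≠ 0 := by
    refine Finset.prod_ne_zero_iff.mpr fun i _ => ?_
    exact Nat.card_pos.ne'
  rw [hn, hBf]
  constructor
  · -- equality implies Pp ≤ f
    intro heq
    have hnne : B.index ≠ 0 := heq ▸ Nat.mul_ne_zero hO hmne
    have e2 : B.relIndex A * (A ⊔ B).index = B.index := by
      rw [← AddSubgroup.relIndex_sup_right]
      exact AddSubgroup.relIndex_mul_index le_sup_right
    have e1 : A.relIndex (A ⊔ B) * (A ⊔ B).index = A.index :=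
      AddSubgroup.relIndex_mul_index le_sup_left
    have e3 : c.toAddSubgroup.relIndex Pp'.toAddSubgroup * Pp'.toAddSubgroup.index
        = c.toAddSubgroup.index :=
      AddSubgroup.relIndex_mul_index fun x hx => hcPp' hx
    have hrt : B.relIndex A * (A ⊔ B).index ≠ 0 := e2 ▸ hnne
    have key : (A.relIndex (A ⊔ B) * (Submodule.toAddSubgroup c).relIndex (Submodule.toAddSubgroup Pp'))
        * (B.relIndex A * (A ⊔ B).index) = B.relIndex A * (A ⊔ B).index := by
      calc (A.relIndex (A ⊔ B) * (Submodule.toAddSubgroup c).relIndex (Submodule.toAddSubgroup Pp'))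
            * (B.relIndex A * (A ⊔ B).index)
          = (A.relIndex (A ⊔ B) * (A ⊔ B).index)
            * ((Submodule.toAddSubgroup c).relIndex (Submodule.toAddSubgroup Pp') * B.relIndex A) := by
            ring
        _ = A.index * ((Submodule.toAddSubgroup c).relIndex (Submodule.toAddSubgroup Pp')
              * (Submodule.toAddSubgroup Pp').index) := by rw [e1, hr]
        _ = A.index * (Submodule.toAddSubgroup c).index := by rw [e3]
        _ = A.index * ∏ i, Nat.card (O ⧸ p i) := by rw [← hm]
        _ = B.index := heq
        _ = B.relIndex A * (A ⊔ B).index := e2.symm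
    have h1 : A.relIndex (A ⊔ B) * (Submodule.toAddSubgroup c).relIndex (Submodule.toAddSubgroup Pp') = 1 :=
      Nat.eq_of_mul_eq_mul_right (Nat.pos_of_ne_zero hrt) (by rw [one_mul]; exact key)
    have h2 : A.relIndex (A ⊔ B) = 1 := Nat.eq_one_of_mul_eq_one_right h1
    have h3 : A ⊔ B ≤ A := AddSubgroup.relIndex_eq_one.mp h2
    exact le_sup_right.trans h3
  · -- Pp ≤ f implies equality
    intro hBA
    -- Pp' = c
    have hPc : Pp' = c := by
      refine le_antisymm ?_ hcPp'
      have hle : ∀ i, Pp' ≤ p i := by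
        intro i
        by_contra hnot
        have hsup : Pp' ⊔ p i = ⊤ :=
          (hmax i).out.2 _ (right_lt_sup.mpr hnot)
        have : Ideal.map O.subtype (Pp' ⊔ p i) = ⊤ := by
          rw [hsup, Ideal.map_top]
        rw [Ideal.map_sup] at this
        have hPple : Pp ≤ Ideal.map O.subtype (p i) := by
          rw [hfact i, hPp]
          exact le_trans Ideal.prod_le_inf (Finset.inf_le (Finset.mem_univ i))
        have : (⊤ : Ideal (𝓞 K)) ≤ Ideal.map O.subtype (p i) := by
          rw [← this]
          exact sup_le (le_trans Ideal.map_comap_le hPple) le_rfl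
        exact hPpine i (top_le_iff.mp this)
      have h4 : Pp' ≤ ⨅ i, p i := le_iInf hle
      have hcop : Pairwise (Function.onFun IsCoprime p) := fun i j hij =>
        (Ideal.isCoprime_iff_sup_eq).mpr
          ((hmax i).coprime_of_ne (hmax j) (fun h => hij (hpdist h)))
      have hinf : (⨅ i, p i) = c := by
        rw [hc, prod_eq_inf_aux Finset.univ p (fun i _ j _ hij => hcop hij)]
        simp [Finset.inf_eq_iInf]
      exact hinf ▸ h4
    have e4 : B.relIndex A * A.index = B.index :=
      AddSubgroup.relIndex_mul_index hBA
    rw [← e4, hm, ← hr, hPc, Nat.mul_comm]
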